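/- In the A₂ τ-function representation (s₁(τ₁) = f₁τ₂/τ₁, s₂(τ₂) = f₂τ₁/τ₂, s_i(τ_j) = τ_j for i ≠ j, with the standard actions on α's and f's), the braid relation s₁s₂s₁ = s₂s₁s₂ holds as automorphisms of ℂ(α₁,α₂,f₁,f₂,τ₁,τ₂). -/

import Mathlib

/-- The field ℂ(α₁, α₂, f₁, f₂, τ₁, τ₂) of rational functions. -/
noncomputable abbrev K : Type := FractionRing (MvPolynomial (Fin 6) ℂ)

/-- Generators: `gen 0 = α₁`, `gen 1 = α₂`, `gen 2 = f₁`, `gen 3 = f₂`,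
`gen 4 = τ₁`, `gen 5 = τ₂`. -/
noncomputable def gen (i : Fin 6) : K :=
  algebraMap (MvPolynomial (Fin 6) ℂ) K (MvPolynomial.X i)

set_option maxHeartbeats 2000000
set_option synthInstance.maxHeartbeats 1000000

lemma algMap_inj : Function.Injective (algebraMap (MvPolynomial (Fin 6) ℂ) K) :=
  IsFractionRing.injective _ _

lemma gen_ne_zero (i : Fin 6) : gen i ≠ 0 := by
  intro h
  exact MvPolynomial.X_ne_zero i (algMap_inj (by simpa [gen] using h))

lemma poly_ne_of_eval {p : MvPolynomial (Fin 6) ℂ} (v : Fin 6 → ℂ)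
    (h : MvPolynomial.eval v p ≠ 0) : p ≠ 0 := by
  intro hp; apply h; rw [hp, map_zero]

lemma genP_ne_zero : gen 2 * gen 3 + gen 0 ≠ 0 := by
  have he : gen 2 * gen 3 + gen 0 = algebraMap (MvPolynomial (Fin 6) ℂ) K
      (MvPolynomial.X 2 * MvPolynomial.X 3 + MvPolynomial.X 0) := by
    rw [map_add, map_mul]; rfl
  rw [he]
  intro h
  have h0 := algMap_inj (h.trans (map_zero _).symm)
  exact poly_ne_of_eval (fun j => if j = 0 then 1 else 0) (by simp) h0

lemma genQ_ne_zero : gen 2 * gen 3 - gen 1 ≠ 0 := by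
  have he : gen 2 * gen 3 - gen 1 = algebraMap (MvPolynomial (Fin 6) ℂ) K
      (MvPolynomial.X 2 * MvPolynomial.X 3 - MvPolynomial.X 1) := by
    rw [map_sub, map_mul]; rfl
  rw [he]
  intro h
  have h0 := algMap_inj (h.trans (map_zero _).symm)
  exact poly_ne_of_eval (fun j => if j = 1 then 1 else 0) (by simp) h0

/-- in the A₂ τ-function representation, the braid relation
s₁s₂s₁ = s₂s₁s₂ holds. -/
theorem stmt13 (s₁ s₂ : K ≃ₐ[ℂ] K)
    (h1a1 : s₁ (gen 0) = -gen 0)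
    (h1a2 : s₁ (gen 1) = gen 1 + gen 0)
    (h1f1 : s₁ (gen 2) = gen 2)
    (h1f2 : s₁ (gen 3) = gen 3 + gen 0 / gen 2)
    (h1t1 : s₁ (gen 4) = gen 2 * gen 5 / gen 4)
    (h1t2 : s₁ (gen 5) = gen 5)
    (h2a2 : s₂ (gen 1) = -gen 1)
    (h2a1 : s₂ (gen 0) = gen 0 + gen 1)
    (h2f2 : s₂ (gen 3) = gen 3)
    (h2f1 : s₂ (gen 2) = gen 2 - gen 1 / gen 3)
    (h2t2 : s₂ (gen 5) = gen 3 * gen 4 / gen 5)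
    (h2t1 : s₂ (gen 4) = gen 4) :
    ∀ x : K, s₁ (s₂ (s₁ x)) = s₂ (s₁ (s₂ x)) := by
  have h2 := gen_ne_zero 2
  have h3 := gen_ne_zero 3
  have h4 := gen_ne_zero 4
  have h5 := gen_ne_zero 5
  have hP := genP_ne_zero
  have hQ := genQ_ne_zero
  have hP' : gen 3 * gen 2 + gen 0 ≠ 0 := by rwa [mul_comm] at hP
  have hQ' : gen 3 * gen 2 - gen 1 ≠ 0 := by rwa [mul_comm] at hQ
  have hD2 : gen 2 * gen 3 ^ 2 + gen 3 * gen 0 ≠ 0 := by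
    have e : gen 2 * gen 3 ^ 2 + gen 3 * gen 0 = gen 3 * (gen 2 * gen 3 + gen 0) := by ring
    rw [e]; exact mul_ne_zero h3 hP
  have hD3 : gen 3 * gen 2 ^ 2 - gen 2 * gen 1 ≠ 0 := by
    have e : gen 3 * gen 2 ^ 2 - gen 2 * gen 1 = gen 2 * (gen 2 * gen 3 - gen 1) := by ring
    rw [e]; exact mul_ne_zero h2 hQ
  have hD4 : gen 2 ^ 2 * gen 0 * gen 5 ^ 2 * gen 4 + gen 2 ^ 3 * gen 3 * gen 5 ^ 2 * gen 4 ≠ 0 := by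
    have e : gen 2 ^ 2 * gen 0 * gen 5 ^ 2 * gen 4 + gen 2 ^ 3 * gen 3 * gen 5 ^ 2 * gen 4
        = gen 2 ^ 2 * gen 5 ^ 2 * gen 4 * (gen 2 * gen 3 + gen 0) := by ring
    rw [e]
    exact mul_ne_zero (mul_ne_zero (mul_ne_zero (pow_ne_zero 2 h2) (pow_ne_zero 2 h5)) h4) hP
  have hD5 : -(gen 3 ^ 2 * gen 5 * gen 1 * gen 4 ^ 2) + gen 3 ^ 3 * gen 2 * gen 5 * gen 4 ^ 2 ≠ 0 := by
    have e : -(gen 3 ^ 2 * gen 5 * gen 1 * gen 4 ^ 2) + gen 3 ^ 3 * gen 2 * gen 5 * gen 4 ^ 2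
        = gen 3 ^ 2 * gen 5 * gen 4 ^ 2 * (gen 2 * gen 3 - gen 1) := by ring
    rw [e]
    exact mul_ne_zero (mul_ne_zero (mul_ne_zero (pow_ne_zero 2 h3) h5) (pow_ne_zero 2 h4)) hQ
  have tac : ∀ n : Fin 6, True := fun _ => trivial
  have c0 : s₁ (s₂ (s₁ (gen 0))) = s₂ (s₁ (s₂ (gen 0))) := by
    simp only [map_neg, map_add, map_sub, map_mul, map_div₀,
      h1a1, h1a2, h1f1, h1f2, h1t1, h1t2, h2a1, h2a2, h2f1, h2f2, h2t1, h2t2]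
    ring
  have c1 : s₁ (s₂ (s₁ (gen 1))) = s₂ (s₁ (s₂ (gen 1))) := by
    simp only [map_neg, map_add, map_sub, map_mul, map_div₀,
      h1a1, h1a2, h1f1, h1f2, h1t1, h1t2, h2a1, h2a2, h2f1, h2f2, h2t1, h2t2]
    ring
  have c2 : s₁ (s₂ (s₁ (gen 2))) = s₂ (s₁ (s₂ (gen 2))) := by
    simp only [map_neg, map_add, map_sub, map_mul, map_div₀,
      h1a1, h1a2, h1f1, h1f2, h1t1, h1t2, h2a1, h2a2, h2f1, h2f2, h2t1, h2t2]
    have hB : gen 3 * (gen 2 * gen 3 - gen 1) + (gen 0 + gen 1) * gen 3 ≠ 0 := by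
      rw [show gen 3 * (gen 2 * gen 3 - gen 1) + (gen 0 + gen 1) * gen 3
          = gen 3 * (gen 2 * gen 3 + gen 0) from by ring]
      exact mul_ne_zero h3 hP
    field_simp [hP, hQ]
    ring
  have c3 : s₁ (s₂ (s₁ (gen 3))) = s₂ (s₁ (s₂ (gen 3))) := by
    simp only [map_neg, map_add, map_sub, map_mul, map_div₀,
      h1a1, h1a2, h1f1, h1f2, h1t1, h1t2, h2a1, h2a2, h2f1, h2f2, h2t1, h2t2]
    have hB : gen 2 * (gen 3 * gen 2 + gen 0) - (gen 1 + gen 0) * gen 2 ≠ 0 := by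
      rw [show gen 2 * (gen 3 * gen 2 + gen 0) - (gen 1 + gen 0) * gen 2
          = gen 2 * (gen 2 * gen 3 - gen 1) from by ring]
      exact mul_ne_zero h2 hQ
    field_simp [hP, hQ, hQ']
    ring
  have c4 : s₁ (s₂ (s₁ (gen 4))) = s₂ (s₁ (s₂ (gen 4))) := by
    simp only [map_neg, map_add, map_sub, map_mul, map_div₀,
      h1a1, h1a2, h1f1, h1f2, h1t1, h1t2, h2a1, h2a2, h2f1, h2f2, h2t1, h2t2]
    field_simp
    ring
  have c5 : s₁ (s₂ (s₁ (gen 5))) = s₂ (s₁ (s₂ (gen 5))) := by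
    simp only [map_neg, map_add, map_sub, map_mul, map_div₀,
      h1a1, h1a2, h1f1, h1f2, h1t1, h1t2, h2a1, h2a2, h2f1, h2f2, h2t1, h2t2]
    field_simp
    ring
  have key : ∀ i : Fin 6, s₁ (s₂ (s₁ (gen i))) = s₂ (s₁ (s₂ (gen i))) := by
    intro i
    fin_cases i
    exacts [c0, c1, c2, c3, c4, c5]
  intro x
  let A : K →+* K := ((s₁ : K →+* K).comp (s₂ : K →+* K)).comp (s₁ : K →+* K)
  let B : K →+* K := ((s₂ : K →+* K).comp (s₁ : K →+* K)).comp (s₂ : K →+* K)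
  have hAB : A = B := by
    apply IsLocalization.ringHom_ext (nonZeroDivisors (MvPolynomial (Fin 6) ℂ))
    apply MvPolynomial.ringHom_ext
    · intro c
      have hc : (algebraMap (MvPolynomial (Fin 6) ℂ) K) (MvPolynomial.C c)
          = algebraMap ℂ K c := by
        rw [← MvPolynomial.algebraMap_eq, ← IsScalarTower.algebraMap_apply]
      simp [A, B, hc, AlgEquiv.commutes]
    · intro i
      simpa [A, B, gen] using key i
  exact RingHom.congr_fun hAB x
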